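/- Let ℓ ∈ ℕ and let L = (L_0, …, L_{m−1}) be an ℓ-prefix-sorted list of pairwise-distinct lists over a linearly ordered type α. Let S = { i : (i > 0 and L_{i−1}.take ℓ = L_i.take ℓ) or (i < m−1 and L_i.take ℓ = L_{i+1}.take ℓ) }. Let L' = (L'_0, …, L'_{m−1}) be a list of the same length such that L'_i = L_i for all i ∉ S, and such that the subsequence of L' at the positions of S, taken in increasing order of position, is a strictly lexicographically sorted permutation of the subsequence of L at the positions of S. Then for every 1 ≤ i ≤ m−1 with L_{i−1}.take ℓ ≠ L_i.take ℓ, one has lcp(L'_{i−1}, L'_i) = lcp(L_{i−1}, L_i). -/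

import Mathlib

/-- The length of the longest common prefix of two lists: the largest
`k ≤ min |a| |b|` such that `a.take k = b.take k`. -/
def lcp {α : Type*} [DecidableEq α] : List α → List α → ℕ
  | x :: xs, y :: ys => if x = y then lcp xs ys + 1 else 0
  | _, _ => 0

/-- Lexicographic (non-strict) order on lists. -/
def lexLe {α : Type*} [LinearOrder α] (a b : List α) : Prop :=
  List.Lex (· < ·) a b ∨ a = b

/-- A finite sequence of lists is `ℓ`-prefix-sorted if its entries are sorted
lexicographically up to their length-`ℓ` prefixes. -/
def PrefixSorted {α : Type*} [LinearOrder α] (ℓ m : ℕ) (L : Fin m → List α) : Prop :=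
  ∀ i j : Fin m, i ≤ j → lexLe ((L i).take ℓ) ((L j).take ℓ)

/-- `i` belongs to the set `S` of positions that share their length-`ℓ` prefix
with the previous or the next position. -/
def InS {α : Type*} [LinearOrder α] (ℓ m : ℕ) (L : Fin m → List α) (i : Fin m) : Prop :=
  (∃ j : Fin m, j.1 + 1 = i.1 ∧ (L j).take ℓ = (L i).take ℓ) ∨
  (∃ j : Fin m, i.1 + 1 = j.1 ∧ (L i).take ℓ = (L j).take ℓ)

private lemma lexLe_iff_le {α : Type*} [LinearOrder α] (a b : List α) :
    lexLe a b ↔ a ≤ b := by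
  rw [le_iff_lt_or_eq]; exact Iff.rfl

/-- If `a <lex b` then `a.take n ≤lex b.take n`. -/
private lemma lex_take {α : Type*} [LinearOrder α] {a b : List α}
    (h : List.Lex (· < ·) a b) : ∀ n : ℕ, a.take n ≤ b.take n := by
  induction h with
  | nil =>
    intro n
    cases n with
    | zero => exact le_refl _
    | succ n => exact le_of_lt (List.nil_lt_cons _ _)
  | @cons x l₁ l₂ _ ih =>
    intro n
    cases n with
    | zero => exact le_refl _
    | succ n =>
      simp only [List.take_succ_cons]
      rcases lt_or_eq_of_le (ih n) with h' | h'
      · exact le_of_lt (List.Lex.cons h')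
      · rw [h']
  | @rel x l₁ y l₂ hxy =>
    intro n
    cases n with
    | zero => exact le_refl _
    | succ n => exact le_of_lt (List.Lex.rel hxy)

/-- `lcp` only depends on the length-`ℓ` prefixes, provided these differ. -/
private lemma lcp_congr {α : Type*} [DecidableEq α] :
    ∀ (ℓ : ℕ) (a b a' b' : List α), a.take ℓ = a'.take ℓ → b.take ℓ = b'.take ℓ →
      a.take ℓ ≠ b.take ℓ → lcp a' b' = lcp a b
  | 0, a, b, a', b', _, _, hne => absurd rfl hne
  | (ℓ+1), [], b, a', b', ha, _, _ => by
    simp only [List.take_nil] at ha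
    have : a' = [] := by
      cases a' with
      | nil => rfl
      | cons x xs => simp at ha
    subst this
    cases b <;> cases b' <;> rfl
  | (ℓ+1), (x :: xs), [], a', b', ha, hb, _ => by
    simp only [List.take_nil] at hb
    have : b' = [] := by
      cases b' with
      | nil => rfl
      | cons y ys => simp at hb
    subst this
    cases a' with
    | nil => rfl
    | cons x' xs' => rfl
  | (ℓ+1), (x :: xs), (y :: ys), a', b', ha, hb, hne => by
    cases a' with
    | nil => simp at ha
    | cons x' xs' =>
      cases b' with
      | nil => simp at hb
      | cons y' ys' =>
        simp only [List.take_succ_cons, List.cons.injEq] at ha hb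
        obtain ⟨hx, hxs⟩ := ha
        obtain ⟨hy, hys⟩ := hb
        subst hx; subst hy
        by_cases hxy : x = y
        · subst hxy
          simp only [lcp, if_pos rfl]
          have hne' : xs.take ℓ ≠ ys.take ℓ := by
            intro h; apply hne; simp [h]
          rw [lcp_congr ℓ xs ys xs' ys' hxs hys hne']
        · simp only [lcp, if_neg hxy]

theorem stmt_15 {α : Type*} [LinearOrder α] (ℓ m : ℕ) (L L' : Fin m → List α)
    (hsorted : PrefixSorted ℓ m L)
    (hdist : ∀ i j : Fin m, i ≠ j → L i ≠ L j)
    (hperm : ∃ σ : Equiv.Perm (Fin m),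
      (∀ i : Fin m, ¬ InS ℓ m L i → σ i = i) ∧ ∀ i : Fin m, L' i = L (σ i))
    (hfix : ∀ i : Fin m, ¬ InS ℓ m L i → L' i = L i)
    (hsortS : ∀ i j : Fin m, InS ℓ m L i → InS ℓ m L j → i < j →
      List.Lex (· < ·) (L' i) (L' j)) :
    ∀ i j : Fin m, i.1 + 1 = j.1 → (L i).take ℓ ≠ (L j).take ℓ →
      lcp (L' i) (L' j) = lcp (L i) (L j) := by
  classical
  obtain ⟨σ, hσfix, hσ⟩ := hperm
  -- σ maps S into S
  have hσS : ∀ i : Fin m, InS ℓ m L i → InS ℓ m L (σ i) := by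
    intro i hi
    by_contra h
    have h1 := hσfix _ h
    have : σ i = i := σ.injective h1
    rw [this] at h
    exact h hi
  have hσS' : ∀ i : Fin m, InS ℓ m L i → InS ℓ m L (σ.symm i) := by
    intro i hi
    by_contra h
    have h1 := hσfix _ h
    have : σ.symm i = i := by
      conv_rhs => rw [← σ.apply_symm_apply i, h1]
    rw [this] at h
    exact h hi
  -- key: prefixes are preserved
  have hpre : ∀ i : Fin m, (L' i).take ℓ = (L i).take ℓ := by
    intro i
    by_cases hi : InS ℓ m L i
    · -- sorted-permutation argument
      set T : Finset (Fin m) := Finset.univ.filter (fun k => InS ℓ m L k) with hT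
      have hmemT : ∀ k, k ∈ T ↔ InS ℓ m L k := by
        intro k; simp [hT]
      set l : List (Fin m) := T.sort (· ≤ ·) with hl
      have hnd : l.Nodup := T.sort_nodup _
      have hmem : ∀ k, k ∈ l ↔ InS ℓ m L k := by
        intro k; rw [hl, Finset.mem_sort, hmemT]
      have hndσ : (l.map σ).Nodup := hnd.map σ.injective
      have hmemσ : ∀ k, k ∈ l.map σ ↔ k ∈ l := by
        intro k
        simp only [List.mem_map]
        constructor
        · rintro ⟨y, hy, rfl⟩
          rw [hmem] at hy ⊢
          exact hσS _ hy
        · intro hk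
          refine ⟨σ.symm k, ?_, σ.apply_symm_apply k⟩
          rw [hmem] at hk ⊢
          exact hσS' _ hk
      have hperm : List.Perm (l.map σ) l := (List.perm_ext_iff_of_nodup hndσ hnd).2 hmemσ
      have hperm2 : List.Perm (l.map (fun k => (L (σ k)).take ℓ)) (l.map (fun k => (L k).take ℓ)) := by
        have := hperm.map (fun k => (L k).take ℓ)
        rwa [List.map_map] at this
      have hs1 : (l.map (fun k => (L k).take ℓ)).Pairwise (· ≤ ·) := by
        rw [List.pairwise_map]
        exact (T.pairwise_sort (· ≤ ·)).imp (fun h => (lexLe_iff_le _ _).1 (hsorted _ _ h))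
      have hs2 : (l.map (fun k => (L (σ k)).take ℓ)).Pairwise (· ≤ ·) := by
        rw [List.pairwise_map]
        refine (T.sortedLT_sort.pairwise).imp_of_mem ?_
        intro a b ha hb hab
        rw [hmem] at ha hb
        have := hsortS a b ha hb hab
        rw [hσ a, hσ b] at this
        exact lex_take this ℓ
      have heq : l.map (fun k => (L (σ k)).take ℓ) = l.map (fun k => (L k).take ℓ) :=
        List.Perm.eq_of_pairwise' hs2 hs1 hperm2
      have hil : i ∈ l := (hmem i).2 hi
      rw [hσ i]
      exact (List.map_inj_left.1 heq i hil)
    · rw [hfix i hi]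
  intro i j hij hne
  exact lcp_congr ℓ (L i) (L j) (L' i) (L' j) (hpre i).symm (hpre j).symm hne
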